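/- Let V be a finite-dimensional complex vector space with a U_q(sl₂)-module structure (X⁺, X⁻, K) such that V = ⊕_{i=0}^{d} Uᵢ, where Uᵢ is the eigenspace of K with eigenvalue q^{2i−d}. Let W be a subspace of V with X⁺W ⊆ W and KW ⊆ W. If dim(W ∩ Uᵢ) = dim(W ∩ U_{d−i}) for all 0 ≤ i ≤ d, then X⁻W ⊆ W. -/

import Mathlib

open scoped TensorProduct

noncomputable section

/-- The `q`-integer `[t] = (q^t - q^(-t))/(q - q⁻¹)`. -/
def qnum (q : ℂ) (t : ℤ) : ℂ := (q ^ t - q ^ (-t)) / (q - q⁻¹)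

/-- The `q`-factorial `[t]! = [t][t-1]⋯[1]`. -/
def qfac (q : ℂ) (t : ℕ) : ℂ := ∏ k ∈ Finset.range t, qnum q ((k : ℤ) + 1)

/-- Commutator `[X,Y] = XY - YX`. -/
def brk {V : Type*} [AddCommGroup V] [Module ℂ V] (X Y : Module.End ℂ V) :
    Module.End ℂ V := X * Y - Y * X

/-- `q`-commutator `[X,Y]_t = t XY - t⁻¹ YX`. -/
def brkq {V : Type*} [AddCommGroup V] [Module ℂ V] (t : ℂ) (X Y : Module.End ℂ V) :
    Module.End ℂ V := t • (X * Y) - t⁻¹ • (Y * X)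

/-- A `U'_q(L(sl₂))`-module structure on a complex vector space `V`:
operators `(E₀⁺, E₁⁺, E₁⁻, K₀, K₁)` with `K₀, K₁` mutually inverse (hence invertible) and
the defining relations; `K₀ = K₁⁻¹` throughout. -/
structure IsUqpRep (q : ℂ) {V : Type*} [AddCommGroup V] [Module ℂ V]
    (E0 E1p E1m K0 K1 : Module.End ℂ V) : Prop where
  K0K1 : K0 * K1 = 1
  K1K0 : K1 * K0 = 1
  K0E0 : K0 * E0 = q ^ 2 • (E0 * K0)
  K1E1p : K1 * E1p = q ^ 2 • (E1p * K1)
  K1E1m : K1 * E1m = (q ^ 2)⁻¹ • (E1m * K1)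
  K1E0 : K1 * E0 = (q ^ 2)⁻¹ • (E0 * K1)
  K0E1p : K0 * E1p = (q ^ 2)⁻¹ • (E1p * K0)
  K0E1m : K0 * E1m = q ^ 2 • (E1m * K0)
  e1comm : E1p * E1m - E1m * E1p = (q - q⁻¹)⁻¹ • (K1 - K0)
  e0e1m : E0 * E1m = E1m * E0
  serre01 : brk E0 (brkq q⁻¹ E0 (brkq q E0 E1p)) = 0
  serre10 : brk E1p (brkq q⁻¹ E1p (brkq q E1p E0)) = 0

/-- `K₀` of the evaluation module `V(ℓ,a)`: `K₀ vᵢ = q^(2i-ℓ) vᵢ`. -/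
def evalK0 (q : ℂ) (ℓ : ℕ) : Module.End ℂ (Fin (ℓ + 1) → ℂ) :=
  (Matrix.diagonal fun i : Fin (ℓ + 1) => q ^ (2 * (i : ℤ) - ℓ)).mulVecLin

/-- `K₁` of the evaluation module `V(ℓ,a)`: `K₁ vᵢ = q^(ℓ-2i) vᵢ`. -/
def evalK1 (q : ℂ) (ℓ : ℕ) : Module.End ℂ (Fin (ℓ + 1) → ℂ) :=
  (Matrix.diagonal fun i : Fin (ℓ + 1) => q ^ ((ℓ : ℤ) - 2 * i)).mulVecLin

/-- `E₀⁺` of the evaluation module `V(ℓ,a)`: `E₀⁺ vᵢ = a q [i+1] vᵢ₊₁`. -/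
def evalE0 (q a : ℂ) (ℓ : ℕ) : Module.End ℂ (Fin (ℓ + 1) → ℂ) :=
  (Matrix.of fun j i : Fin (ℓ + 1) =>
    if (j : ℕ) = (i : ℕ) + 1 then a * q * qnum q ((i : ℤ) + 1) else 0).mulVecLin

/-- `E₁⁺` of the evaluation module `V(ℓ,a)`: `E₁⁺ vᵢ = [ℓ-i+1] vᵢ₋₁`. -/
def evalE1p (q : ℂ) (ℓ : ℕ) : Module.End ℂ (Fin (ℓ + 1) → ℂ) :=
  (Matrix.of fun j i : Fin (ℓ + 1) =>
    if (i : ℕ) = (j : ℕ) + 1 then qnum q ((ℓ : ℤ) - (i : ℤ) + 1) else 0).mulVecLin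

/-- `E₁⁻` of the evaluation module `V(ℓ,a)`: `E₁⁻ vᵢ = [i+1] vᵢ₊₁`. -/
def evalE1m (q : ℂ) (ℓ : ℕ) : Module.End ℂ (Fin (ℓ + 1) → ℂ) :=
  (Matrix.of fun j i : Fin (ℓ + 1) =>
    if (j : ℕ) = (i : ℕ) + 1 then qnum q ((i : ℤ) + 1) else 0).mulVecLin

/-- Irreducibility: the only subspaces invariant under all five operators are `⊥` and `⊤`. -/
def IsIrred {V : Type*} [AddCommGroup V] [Module ℂ V]
    (E0 E1p E1m K0 K1 : Module.End ℂ V) : Prop :=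
  ∀ W : Submodule ℂ V, (∀ v ∈ W, E0 v ∈ W) → (∀ v ∈ W, E1p v ∈ W) →
    (∀ v ∈ W, E1m v ∈ W) → (∀ v ∈ W, K0 v ∈ W) → (∀ v ∈ W, K1 v ∈ W) →
    W = ⊥ ∨ W = ⊤

/-- Type `(1,1)`: `K₀` is diagonalizable with all eigenvalues of the form `q^(2i-d)`,
`0 ≤ i ≤ d`, i.e. the corresponding eigenspaces span. -/
def IsType11 (q : ℂ) {V : Type*} [AddCommGroup V] [Module ℂ V] (K0 : Module.End ℂ V) : Prop :=
  ∃ d : ℕ, ⨆ i : Fin (d + 1), Module.End.eigenspace K0 (q ^ (2 * (i : ℤ) - d)) = ⊤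

/-- A `U_q(sl₂)`-module structure `(X⁺, X⁻, K)` (with `Kinv` the inverse of `K`). -/
structure IsUqSl2 (q : ℂ) {V : Type*} [AddCommGroup V] [Module ℂ V]
    (Xp Xm K Kinv : Module.End ℂ V) : Prop where
  KKinv : K * Kinv = 1
  KinvK : Kinv * K = 1
  KXp : K * Xp = q ^ 2 • (Xp * K)
  KXm : K * Xm = (q ^ 2)⁻¹ • (Xm * K)
  comm : Xp * Xm - Xm * Xp = (q - q⁻¹)⁻¹ • (K - Kinv)

namespace Stmt5

variable {q : ℂ}

lemma qpow_inj (hq0 : q ≠ 0) (hq : ∀ n : ℕ, 0 < n → q ^ n ≠ 1) :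
    ∀ {a b : ℤ}, q ^ a = q ^ b → a = b := by
  intro a b hab
  by_contra hne
  have hc : a - b ≠ 0 := sub_ne_zero.mpr hne
  have h1 : q ^ (a - b) = 1 := by
    rw [zpow_sub₀ hq0, hab, div_self (zpow_ne_zero _ hq0)]
  have h2 : q ^ ((a - b).natAbs : ℤ) = 1 := by
    rcases Int.natAbs_eq (a - b) with h | h
    · rw [← h, h1]
    · have h3 : ((a-b).natAbs : ℤ) = -(a-b) := by omega
      rw [h3, zpow_neg, h1, inv_one]
  rw [zpow_natCast] at h2
  exact hq _ (Int.natAbs_pos.mpr hc) h2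

lemma qsub_ne (hq0 : q ≠ 0) (hq : ∀ n : ℕ, 0 < n → q ^ n ≠ 1) : q - q⁻¹ ≠ 0 := by
  intro h
  have h1 : q = q⁻¹ := by linear_combination h
  have h2 : q ^ (2:ℕ) = 1 := by
    rw [pow_two]; nth_rewrite 2 [h1]; exact mul_inv_cancel₀ hq0
  exact hq 2 (by norm_num) h2

lemma qsq_ne (hq0 : q ≠ 0) (hq : ∀ n : ℕ, 0 < n → q ^ n ≠ 1) : q ^ 2 - 1 ≠ 0 := by
  intro h
  apply qsub_ne hq0 hq
  field_simp
  linear_combination h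

/-- `φ(t) = (q^{t+1} + q^{-t-1})/(q-q⁻¹)²`, the Casimir eigenvalue. -/
def phi (q : ℂ) (t : ℤ) : ℂ := (q ^ (t+1) + q ^ (-t-1)) / (q - q⁻¹) ^ 2

lemma phi_step (hq0 : q ≠ 0) (hq : ∀ n : ℕ, 0 < n → q ^ n ≠ 1) (w : ℤ) :
    phi q (w - 2) + qnum q w = phi q w := by
  have hs := qsub_ne hq0 hq
  have hq2 := qsq_ne hq0 hq
  unfold phi qnum
  rw [show w - 2 + 1 = w + (-1) from by ring, show -(w-2) - 1 = -w + 1 from by ring,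
    show -w - 1 = -w + (-1) from by ring, show (-w : ℤ) + 1 = -w + 1 from rfl]
  rw [zpow_add₀ hq0 w (-1), zpow_add₀ hq0 (-w) 1, zpow_add₀ hq0 (-w) (-1), zpow_add₀ hq0 w 1]
  rw [zpow_neg q w, zpow_neg q 1, zpow_one]
  have ht : (q ^ w) ≠ 0 := zpow_ne_zero _ hq0
  have e : q - q⁻¹ = (q ^ 2 - 1) / q := by field_simp
  rw [e]
  set t := q ^ w with htdef
  field_simp
  ring

lemma phi_neg (w : ℤ) : phi q (w - 2) = phi q (-w) := by
  unfold phi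
  rw [show w - 2 + 1 = w - 1 from by ring, show -(w-2) - 1 = -w + 1 from by ring,
    show (-w : ℤ) + 1 = -w + 1 from rfl, show -(-w) - 1 = w - 1 from by ring, add_comm]

lemma phi_inj (hq0 : q ≠ 0) (hq : ∀ n : ℕ, 0 < n → q ^ n ≠ 1) {a b : ℤ}
    (hab : phi q a = phi q b) : a = b ∨ a + b = -2 := by
  have hs := qsub_ne hq0 hq
  have hs2 : (q - q⁻¹) ^ 2 ≠ 0 := pow_ne_zero _ hs
  unfold phi at hab
  rw [div_eq_div_iff hs2 hs2] at hab
  have hab' : q ^ (a+1) + q ^ (-a-1) = q ^ (b+1) + q ^ (-b-1) :=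
    mul_right_cancel₀ hs2 hab
  rw [show -a - 1 = -(a+1) from by ring, show -b - 1 = -(b+1) from by ring,
    zpow_neg, zpow_neg] at hab'
  set x := q ^ (a+1) with hx
  set y := q ^ (b+1) with hy
  have hxne : x ≠ 0 := zpow_ne_zero _ hq0
  have hyne : y ≠ 0 := zpow_ne_zero _ hq0
  have h0 : (x - y) * (x * y - 1) = 0 := by
    have h1 : x * y * (x + x⁻¹) = x * y * (y + y⁻¹) := by rw [hab']
    field_simp at h1
    have h2 : (x - y) * (x * y - 1) * (x * y) = 0 := by linear_combination (x * y) * h1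
    rcases mul_eq_zero.mp h2 with h | h
    · exact h
    · exact absurd h (mul_ne_zero hxne hyne)
  rcases mul_eq_zero.mp h0 with h | h
  · left
    have : x = y := by linear_combination h
    have := qpow_inj hq0 hq (hx ▸ hy ▸ this)
    omega
  · right
    have hxy : q ^ (a + b + 2) = q ^ (0 : ℤ) := by
      rw [zpow_zero, show a + b + 2 = (a+1) + (b+1) from by ring, zpow_add₀ hq0]
      linear_combination h
    have := qpow_inj hq0 hq hxy
    omega


variable {V : Type*} [AddCommGroup V] [Module ℂ V]
variable {Xp Xm K Kinv : Module.End ℂ V} {d : ℕ}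

/-- The weight space with eigenvalue `q^(2m-d)`. -/
def U (q : ℂ) (K : Module.End ℂ V) (d : ℕ) (m : ℤ) : Submodule ℂ V :=
  Module.End.eigenspace K (q ^ (2 * m - (d : ℤ)))

lemma mem_U {m : ℤ} {v : V} : v ∈ U q K d m ↔ K v = q ^ (2 * m - (d : ℤ)) • v :=
  Module.End.mem_eigenspace_iff

lemma Kinv_apply (h : IsUqSl2 q Xp Xm K Kinv) (hq0 : q ≠ 0) {m : ℤ} {v : V}
    (hv : v ∈ U q K d m) : Kinv v = (q ^ (2 * m - (d : ℤ)))⁻¹ • v := by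
  have h1 : Kinv (K v) = v := by
    rw [← Module.End.mul_apply, h.KinvK, Module.End.one_apply]
  rw [mem_U.mp hv, map_smul] at h1
  rw [eq_inv_smul_iff₀ (zpow_ne_zero _ hq0)]
  exact h1

lemma Xp_mem (h : IsUqSl2 q Xp Xm K Kinv) (hq0 : q ≠ 0) {m : ℤ} {v : V}
    (hv : v ∈ U q K d m) : Xp v ∈ U q K d (m + 1) := by
  have h1 : (K * Xp) v = (q ^ 2 • (Xp * K)) v := by rw [h.KXp]
  simp only [Module.End.mul_apply, LinearMap.smul_apply] at h1
  rw [mem_U] at hv ⊢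
  rw [hv, map_smul, smul_smul] at h1
  rw [h1]
  congr 1
  rw [show (2 * (m + 1) - (d : ℤ)) = (2 : ℕ) + (2 * m - (d : ℤ)) from by push_cast; ring,
    zpow_add₀ hq0, zpow_natCast]

lemma Xm_mem (h : IsUqSl2 q Xp Xm K Kinv) (hq0 : q ≠ 0) {m : ℤ} {v : V}
    (hv : v ∈ U q K d m) : Xm v ∈ U q K d (m - 1) := by
  have h1 : (K * Xm) v = ((q ^ 2)⁻¹ • (Xm * K)) v := by rw [h.KXm]
  simp only [Module.End.mul_apply, LinearMap.smul_apply] at h1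
  rw [mem_U] at hv ⊢
  rw [hv, map_smul, smul_smul] at h1
  rw [h1]
  congr 1
  rw [show (2 * (m - 1) - (d : ℤ)) = -(2 : ℕ) + (2 * m - (d : ℤ)) from by push_cast; ring,
    zpow_add₀ hq0, zpow_neg, zpow_natCast]

lemma Xp_pow_mem (h : IsUqSl2 q Xp Xm K Kinv) (hq0 : q ≠ 0) :
    ∀ (n : ℕ) {m : ℤ} {v : V}, v ∈ U q K d m → (Xp ^ n) v ∈ U q K d (m + n) := by
  intro n
  induction n with
  | zero => intro m v hv; simpa using hv
  | succ n ih =>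
    intro m v hv
    have h2 := Xp_mem h hq0 (ih hv)
    rw [show m + (n : ℤ) + 1 = m + ((n + 1 : ℕ) : ℤ) from by push_cast; ring] at h2
    rw [pow_succ', Module.End.mul_apply]
    exact h2

lemma U_eq_bot (hq0 : q ≠ 0) (hq : ∀ n : ℕ, 0 < n → q ^ n ≠ 1)
    (hdec : ⨆ i : Fin (d + 1), Module.End.eigenspace K (q ^ (2 * (i : ℤ) - d)) = ⊤)
    {m : ℤ} (hm : m < 0 ∨ (d : ℤ) < m) : U q K d m = ⊥ := by
  have hdisj := Module.End.eigenspaces_iSupIndep K (q ^ (2 * m - (d : ℤ)))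
  rw [eq_bot_iff]
  intro x hx
  have hx2 : x ∈ ⨆ (μ : ℂ) (_ : μ ≠ q ^ (2 * m - (d : ℤ))), Module.End.eigenspace K μ := by
    have hxtop : x ∈ (⊤ : Submodule ℂ V) := trivial
    rw [← hdec] at hxtop
    have hle : (⨆ i : Fin (d + 1), Module.End.eigenspace K (q ^ (2 * (i : ℤ) - d))) ≤
        ⨆ (μ : ℂ) (_ : μ ≠ q ^ (2 * m - (d : ℤ))), Module.End.eigenspace K μ := by
      refine iSup_le fun i : Fin (d + 1) => ?_
      refine le_iSup₂_of_le (q ^ (2 * (i : ℤ) - (d : ℤ))) ?_ le_rfl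
      intro heq
      have := qpow_inj hq0 hq heq
      omega
    exact hle hxtop
  exact hdisj.le_bot (Submodule.mem_inf.mpr ⟨hx, hx2⟩)

lemma comm_apply (h : IsUqSl2 q Xp Xm K Kinv) (hq0 : q ≠ 0) {m : ℤ} {v : V}
    (hv : v ∈ U q K d m) :
    Xp (Xm v) - Xm (Xp v) =
      ((q - q⁻¹)⁻¹ * (q ^ (2 * m - (d : ℤ)) - (q ^ (2 * m - (d : ℤ)))⁻¹)) • v := by
  have h1 := LinearMap.ext_iff.mp h.comm v
  simp only [LinearMap.sub_apply, Module.End.mul_apply, LinearMap.smul_apply] at h1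
  rw [h1, mem_U.mp hv, Kinv_apply h hq0 hv, ← sub_smul, smul_smul]

/-- The Casimir operator. -/
def Cas (q : ℂ) (Xp Xm K Kinv : Module.End ℂ V) : Module.End ℂ V :=
  Xm * Xp + (q * ((q - q⁻¹) ^ 2)⁻¹) • K + (q⁻¹ * ((q - q⁻¹) ^ 2)⁻¹) • Kinv

lemma Cas_apply (h : IsUqSl2 q Xp Xm K Kinv) (hq0 : q ≠ 0) {m : ℤ} {v : V}
    (hv : v ∈ U q K d m) :
    Cas q Xp Xm K Kinv v = Xm (Xp v) + phi q (2 * m - (d : ℤ)) • v := by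
  unfold Cas
  simp only [LinearMap.add_apply, Module.End.mul_apply, LinearMap.smul_apply]
  rw [mem_U.mp hv, Kinv_apply h hq0 hv, smul_smul, smul_smul, add_assoc, ← add_smul]
  congr 2
  unfold phi
  rw [show 2 * m - (d : ℤ) + 1 = (2 * m - (d : ℤ)) + 1 from rfl,
    show -(2 * m - (d : ℤ)) - 1 = -(2 * m - (d : ℤ)) + (-1) from by ring,
    zpow_add₀ hq0, zpow_add₀ hq0, zpow_neg, zpow_one, zpow_neg_one, div_eq_mul_inv]
  ring

lemma Cas_mem (h : IsUqSl2 q Xp Xm K Kinv) (hq0 : q ≠ 0) {m : ℤ} {v : V}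
    (hv : v ∈ U q K d m) : Cas q Xp Xm K Kinv v ∈ U q K d m := by
  rw [Cas_apply h hq0 hv]
  have h1 := Xm_mem h hq0 (Xp_mem h hq0 hv)
  rw [show m + 1 - 1 = m from by ring] at h1
  exact add_mem h1 (Submodule.smul_mem _ _ hv)

lemma ext_weights
    (hdec : ⨆ i : Fin (d + 1), Module.End.eigenspace K (q ^ (2 * (i : ℤ) - d)) = ⊤)
    {A B : Module.End ℂ V} (hAB : ∀ (m : ℤ), ∀ v ∈ U q K d m, A v = B v) : A = B := by
  ext v
  have hv : v ∈ (⊤ : Submodule ℂ V) := trivial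
  rw [← hdec] at hv
  exact Submodule.iSup_induction (motive := fun x => A x = B x) _ hv
    (fun i x hx => hAB i x hx) (by simp)
    (fun x y hx hy => by show A (x + y) = B (x + y); rw [map_add, map_add, hx, hy])

lemma cas_comm_Xp (h : IsUqSl2 q Xp Xm K Kinv) (hq0 : q ≠ 0)
    (hq : ∀ n : ℕ, 0 < n → q ^ n ≠ 1)
    (hdec : ⨆ i : Fin (d + 1), Module.End.eigenspace K (q ^ (2 * (i : ℤ) - d)) = ⊤) :
    Cas q Xp Xm K Kinv * Xp = Xp * Cas q Xp Xm K Kinv := by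
  apply ext_weights hdec
  intro m v hv
  rw [Module.End.mul_apply, Module.End.mul_apply,
    Cas_apply h hq0 (Xp_mem h hq0 hv), Cas_apply h hq0 hv, map_add, map_smul]
  have hcomm := comm_apply h hq0 (Xp_mem h hq0 hv)
  have h2 : Xm (Xp (Xp v)) = Xp (Xm (Xp v)) -
      ((q - q⁻¹)⁻¹ * (q ^ (2 * (m + 1) - (d : ℤ)) - (q ^ (2 * (m + 1) - (d : ℤ)))⁻¹)) • Xp v := by
    rw [← hcomm]; abel
  have hsc : phi q (2 * (m + 1) - (d : ℤ)) -
      (q - q⁻¹)⁻¹ * (q ^ (2 * (m + 1) - (d : ℤ)) - (q ^ (2 * (m + 1) - (d : ℤ)))⁻¹) =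
      phi q (2 * m - (d : ℤ)) := by
    have hst := phi_step hq0 hq (2 * (m + 1) - (d : ℤ))
    rw [show 2 * (m + 1) - (d : ℤ) - 2 = 2 * m - (d : ℤ) from by ring] at hst
    unfold qnum at hst
    rw [zpow_neg] at hst
    rw [← hst, div_eq_mul_inv]
    ring
  rw [h2]
  calc Xp (Xm (Xp v)) -
        ((q - q⁻¹)⁻¹ * (q ^ (2 * (m + 1) - (d : ℤ)) - (q ^ (2 * (m + 1) - (d : ℤ)))⁻¹)) • Xp v +
        phi q (2 * (m + 1) - (d : ℤ)) • Xp v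
      = Xp (Xm (Xp v)) + (phi q (2 * (m + 1) - (d : ℤ)) -
          (q - q⁻¹)⁻¹ * (q ^ (2 * (m + 1) - (d : ℤ)) - (q ^ (2 * (m + 1) - (d : ℤ)))⁻¹)) • Xp v := by
        rw [sub_smul]; abel
    _ = Xp (Xm (Xp v)) + phi q (2 * m - (d : ℤ)) • Xp v := by rw [hsc]

lemma cas_comm_Xm (h : IsUqSl2 q Xp Xm K Kinv) (hq0 : q ≠ 0)
    (hq : ∀ n : ℕ, 0 < n → q ^ n ≠ 1)
    (hdec : ⨆ i : Fin (d + 1), Module.End.eigenspace K (q ^ (2 * (i : ℤ) - d)) = ⊤) :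
    Cas q Xp Xm K Kinv * Xm = Xm * Cas q Xp Xm K Kinv := by
  apply ext_weights hdec
  intro m v hv
  rw [Module.End.mul_apply, Module.End.mul_apply,
    Cas_apply h hq0 (Xm_mem h hq0 hv), Cas_apply h hq0 hv, map_add, map_smul]
  have h3 : Xp (Xm v) = Xm (Xp v) +
      ((q - q⁻¹)⁻¹ * (q ^ (2 * m - (d : ℤ)) - (q ^ (2 * m - (d : ℤ)))⁻¹)) • v := by
    rw [← comm_apply h hq0 hv]; abel
  have h4 := congrArg Xm h3
  rw [map_add, map_smul] at h4
  have hsc : ((q - q⁻¹)⁻¹ * (q ^ (2 * m - (d : ℤ)) - (q ^ (2 * m - (d : ℤ)))⁻¹)) +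
      phi q (2 * (m - 1) - (d : ℤ)) = phi q (2 * m - (d : ℤ)) := by
    have hst := phi_step hq0 hq (2 * m - (d : ℤ))
    rw [show 2 * m - (d : ℤ) - 2 = 2 * (m - 1) - (d : ℤ) from by ring] at hst
    unfold qnum at hst
    rw [zpow_neg] at hst
    rw [← hst, div_eq_mul_inv]; ring
  rw [h4, add_assoc, ← add_smul, hsc]

lemma Xm_pow_mem (h : IsUqSl2 q Xp Xm K Kinv) (hq0 : q ≠ 0) :
    ∀ (n : ℕ) {m : ℤ} {v : V}, v ∈ U q K d m → (Xm ^ n) v ∈ U q K d (m - n) := by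
  intro n
  induction n with
  | zero => intro m v hv; simpa using hv
  | succ n ih =>
    intro m v hv
    have h2 := Xm_mem h hq0 (ih hv)
    rw [show m - (n : ℤ) - 1 = m - ((n + 1 : ℕ) : ℤ) from by push_cast; ring] at h2
    rw [pow_succ', Module.End.mul_apply]
    exact h2

lemma inj_pow [FiniteDimensional ℂ V] (h : IsUqSl2 q Xp Xm K Kinv) (hq0 : q ≠ 0)
    (hq : ∀ n : ℕ, 0 < n → q ^ n ≠ 1)
    (hdec : ⨆ i : Fin (d + 1), Module.End.eigenspace K (q ^ (2 * (i : ℤ) - d)) = ⊤)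
    {m : ℤ} (hm0 : 0 ≤ m) (hm : 2 * m ≤ (d : ℤ)) {v : V}
    (hv : v ∈ U q K d m) (hz : (Xp ^ ((d : ℤ) - 2 * m).toNat) v = 0) : v = 0 := by
  by_contra hvne
  classical
  set N : ℕ := ((d : ℤ) - 2 * m).toNat with hNdef
  have hNZ : (N : ℤ) = (d : ℤ) - 2 * m := Int.toNat_of_nonneg (by omega)
  have hc : Commute (Cas q Xp Xm K Kinv) Xp := cas_comm_Xp h hq0 hq hdec
  have hcm : Commute (Cas q Xp Xm K Kinv) Xm := cas_comm_Xm h hq0 hq hdec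
  set S : Submodule ℂ V := U q K d m ⊓ LinearMap.ker (Xp ^ N) with hSdef
  have hvS : v ∈ S := Submodule.mem_inf.mpr ⟨hv, LinearMap.mem_ker.mpr hz⟩
  have hmaps : ∀ x ∈ S, Cas q Xp Xm K Kinv x ∈ S := by
    rintro x hx
    obtain ⟨hx1, hx2⟩ := Submodule.mem_inf.mp hx
    refine Submodule.mem_inf.mpr ⟨Cas_mem h hq0 hx1, LinearMap.mem_ker.mpr ?_⟩
    have e : (Xp ^ N) (Cas q Xp Xm K Kinv x) = Cas q Xp Xm K Kinv ((Xp ^ N) x) := by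
      rw [← Module.End.mul_apply, ← Module.End.mul_apply, (hc.pow_right N).eq]
    rw [e, LinearMap.mem_ker.mp hx2, map_zero]
  set Ω : Module.End ℂ ↥S := (Cas q Xp Xm K Kinv).restrict hmaps with hΩ
  haveI : Nontrivial ↥S := ⟨⟨⟨v, hvS⟩, 0, by simp [Subtype.ext_iff, hvne]⟩⟩
  obtain ⟨φ, hφ⟩ := Module.End.exists_eigenvalue Ω
  obtain ⟨x, hxe, hxne⟩ := hφ.exists_hasEigenvector
  have hxeq : Cas q Xp Xm K Kinv (x : V) = φ • (x : V) := by
    have h5 := Module.End.mem_eigenspace_iff.mp hxe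
    have h6 := congrArg (Subtype.val) h5
    rwa [LinearMap.restrict_coe_apply] at h6
  have hxU : (x : V) ∈ U q K d m := (Submodule.mem_inf.mp x.2).1
  have hxker : (Xp ^ N) (x : V) = 0 := LinearMap.mem_ker.mp (Submodule.mem_inf.mp x.2).2
  have hx0 : (x : V) ≠ 0 := fun h0 => hxne (Subtype.ext h0)
  have hCasPowP : ∀ (k : ℕ),
      Cas q Xp Xm K Kinv ((Xp ^ k) (x : V)) = φ • ((Xp ^ k) (x : V)) := by
    intro k
    rw [← Module.End.mul_apply, (hc.pow_right k).eq, Module.End.mul_apply, hxeq, map_smul]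
  have hCasPowM : ∀ (k : ℕ),
      Cas q Xp Xm K Kinv ((Xm ^ k) (x : V)) = φ • ((Xm ^ k) (x : V)) := by
    intro k
    rw [← Module.End.mul_apply, (hcm.pow_right k).eq, Module.End.mul_apply, hxeq, map_smul]
  -- minimal n with Xp^n x = 0
  have hPex : ∃ n : ℕ, (Xp ^ n) (x : V) = 0 := ⟨N, hxker⟩
  set n := Nat.find hPex with hn_def
  have hn : (Xp ^ n) (x : V) = 0 := Nat.find_spec hPex
  have hnN : n ≤ N := Nat.find_min' hPex hxker
  have hn1 : 1 ≤ n := by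
    by_contra hcon
    have h0 : n = 0 := by omega
    apply hx0
    have := hn
    rw [h0, pow_zero, Module.End.one_apply] at this
    exact this
  set u := (Xp ^ (n - 1)) (x : V) with hu_def
  have hune : u ≠ 0 := Nat.find_min hPex (by omega)
  have huU : u ∈ U q K d (m + ((n - 1 : ℕ) : ℤ)) := Xp_pow_mem h hq0 _ hxU
  have hXpu : Xp u = 0 := by
    rw [hu_def, ← Module.End.mul_apply, ← pow_succ', show n - 1 + 1 = n from by omega]
    exact hn
  have hCu : Cas q Xp Xm K Kinv u = phi q (2 * (m + ((n - 1 : ℕ) : ℤ)) - (d : ℤ)) • u := by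
    rw [Cas_apply h hq0 huU, hXpu, map_zero, zero_add]
  have hphi1 : φ = phi q (2 * (m + ((n - 1 : ℕ) : ℤ)) - (d : ℤ)) := by
    have h7 := hCasPowP (n - 1)
    rw [← hu_def] at h7
    rw [hCu] at h7
    exact (smul_left_injective ℂ hune h7).symm
  -- minimal k with Xm^(k+1) x = 0
  have hQex : ∃ k : ℕ, (Xm ^ (k + 1)) (x : V) = 0 := by
    refine ⟨m.toNat, ?_⟩
    have hmem := Xm_pow_mem h hq0 (m.toNat + 1) hxU
    rw [U_eq_bot hq0 hq hdec (Or.inl (by omega))] at hmem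
    exact Submodule.mem_bot ℂ |>.mp hmem
  set k := Nat.find hQex with hk_def
  have hk : (Xm ^ (k + 1)) (x : V) = 0 := Nat.find_spec hQex
  set z := (Xm ^ k) (x : V) with hz_def
  have hzne : z ≠ 0 := by
    rcases Nat.eq_zero_or_pos k with h0 | hpos
    · rw [hz_def, h0, pow_zero, Module.End.one_apply]; exact hx0
    · have h8 := Nat.find_min hQex (show k - 1 < k from by omega)
      rw [show k - 1 + 1 = k from by omega] at h8
      exact h8
  have hXmz : Xm z = 0 := by
    rw [hz_def, ← Module.End.mul_apply, ← pow_succ']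
    exact hk
  have hzU : z ∈ U q K d (m - (k : ℤ)) := Xm_pow_mem h hq0 _ hxU
  have hCz : Cas q Xp Xm K Kinv z = phi q (-(2 * (m - (k : ℤ)) - (d : ℤ))) • z := by
    rw [Cas_apply h hq0 hzU]
    have hcz := comm_apply h hq0 hzU
    rw [hXmz, map_zero, zero_sub] at hcz
    have h9 : Xm (Xp z) = -(((q - q⁻¹)⁻¹ *
        (q ^ (2 * (m - (k : ℤ)) - (d : ℤ)) - (q ^ (2 * (m - (k : ℤ)) - (d : ℤ)))⁻¹)) • z) :=
      neg_eq_iff_eq_neg.mp hcz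
    rw [h9]
    have hid : -(((q - q⁻¹)⁻¹ *
        (q ^ (2 * (m - (k : ℤ)) - (d : ℤ)) - (q ^ (2 * (m - (k : ℤ)) - (d : ℤ)))⁻¹))) +
        phi q (2 * (m - (k : ℤ)) - (d : ℤ)) = phi q (-(2 * (m - (k : ℤ)) - (d : ℤ))) := by
      have hst := phi_step hq0 hq (2 * (m - (k : ℤ)) - (d : ℤ))
      have hng := phi_neg (q := q) (2 * (m - (k : ℤ)) - (d : ℤ))
      rw [hng] at hst
      unfold qnum at hst
      rw [zpow_neg] at hst
      rw [show -(2 * (m - (k : ℤ)) - (d : ℤ)) = -(2 * (m - (k : ℤ)) - (d : ℤ)) from rfl, ← hst,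
        div_eq_mul_inv]
      ring
    rw [← hid, add_smul, neg_smul]
  have hphi2 : φ = phi q (-(2 * (m - (k : ℤ)) - (d : ℤ))) := by
    have h10 := hCasPowM k
    rw [← hz_def, hCz] at h10
    exact (smul_left_injective ℂ hzne h10).symm
  have hfin := phi_inj hq0 hq (hphi1 ▸ hphi2 : phi q (2 * (m + ((n - 1 : ℕ) : ℤ)) - (d : ℤ)) =
    phi q (-(2 * (m - (k : ℤ)) - (d : ℤ))))
  rcases hfin with hab | hab <;> omega

lemma Xm_Xp_apply (h : IsUqSl2 q Xp Xm K Kinv) (hq0 : q ≠ 0) {m : ℤ} {v : V}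
    (hv : v ∈ U q K d m) :
    Xm (Xp v) = Xp (Xm v) +
      (-((q - q⁻¹)⁻¹ * (q ^ (2 * m - (d : ℤ)) - (q ^ (2 * m - (d : ℤ)))⁻¹))) • v := by
  rw [neg_smul, ← comm_apply h hq0 hv]
  abel

lemma L2p (h : IsUqSl2 q Xp Xm K Kinv) (hq0 : q ≠ 0) :
    ∀ (n : ℕ) {m : ℤ} {v : V}, v ∈ U q K d m →
      ∃ c : ℂ, Xm ((Xp ^ (n + 1)) v) = (Xp ^ (n + 1)) (Xm v) + c • ((Xp ^ n) v) := by
  intro n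
  induction n with
  | zero =>
    intro m v hv
    refine ⟨-((q - q⁻¹)⁻¹ * (q ^ (2 * m - (d : ℤ)) - (q ^ (2 * m - (d : ℤ)))⁻¹)), ?_⟩
    simpa [pow_one] using Xm_Xp_apply h hq0 hv
  | succ n ih =>
    intro m v hv
    obtain ⟨c, hc⟩ := ih (Xp_mem h hq0 hv)
    refine ⟨c + -((q - q⁻¹)⁻¹ * (q ^ (2 * m - (d : ℤ)) - (q ^ (2 * m - (d : ℤ)))⁻¹)), ?_⟩
    have e1 : (Xp ^ (n + 1 + 1)) v = (Xp ^ (n + 1)) (Xp v) := by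
      rw [pow_succ, Module.End.mul_apply]
    have e2 : (Xp ^ n) (Xp v) = (Xp ^ (n + 1)) v := by
      rw [pow_succ, Module.End.mul_apply]
    rw [e1, hc, Xm_Xp_apply h hq0 hv, map_add, map_smul, e2]
    have e3 : (Xp ^ (n + 1)) (Xp (Xm v)) = (Xp ^ (n + 1 + 1)) (Xm v) := by
      rw [pow_succ Xp (n + 1), Module.End.mul_apply]
    rw [e3, add_smul]
    abel

lemma XpW_pow {W : Submodule ℂ V} (hXp : ∀ v ∈ W, Xp v ∈ W) :
    ∀ (k : ℕ) (v : V), v ∈ W → (Xp ^ k) v ∈ W := by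
  intro k
  induction k with
  | zero => intro v hv; simpa using hv
  | succ k ih =>
    intro v hv
    rw [pow_succ', Module.End.mul_apply]
    exact hXp _ (ih v hv)

lemma surj_W [FiniteDimensional ℂ V] (h : IsUqSl2 q Xp Xm K Kinv) (hq0 : q ≠ 0)
    (hq : ∀ n : ℕ, 0 < n → q ^ n ≠ 1)
    (hdec : ⨆ i : Fin (d + 1), Module.End.eigenspace K (q ^ (2 * (i : ℤ) - d)) = ⊤)
    {W : Submodule ℂ V} (hXp : ∀ v ∈ W, Xp v ∈ W)
    (hdim : ∀ i : Fin (d + 1),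
      Module.finrank ℂ ↥(W ⊓ Module.End.eigenspace K (q ^ (2 * (i : ℤ) - d))) =
        Module.finrank ℂ ↥(W ⊓ Module.End.eigenspace K (q ^ ((d : ℤ) - 2 * i))))
    {m : ℤ} (hm0 : 0 ≤ m) (hm : 2 * m ≤ (d : ℤ)) {y : V}
    (hyW : y ∈ W) (hyU : y ∈ U q K d ((d : ℤ) - m)) :
    ∃ x, x ∈ W ∧ x ∈ U q K d m ∧ (Xp ^ ((d : ℤ) - 2 * m).toNat) x = y := by
  classical
  set N : ℕ := ((d : ℤ) - 2 * m).toNat with hNdef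
  have hNZ : (N : ℤ) = (d : ℤ) - 2 * m := Int.toNat_of_nonneg (by omega)
  have hmapsto : ∀ x ∈ W ⊓ U q K d m, (Xp ^ N) x ∈ W ⊓ U q K d ((d : ℤ) - m) := by
    rintro x hx
    obtain ⟨hx1, hx2⟩ := Submodule.mem_inf.mp hx
    refine Submodule.mem_inf.mpr ⟨XpW_pow hXp N x hx1, ?_⟩
    have h1 := Xp_pow_mem h hq0 N hx2
    rwa [show m + (N : ℤ) = (d : ℤ) - m from by omega] at h1
  set F := (Xp ^ N).restrict hmapsto with hF
  have hFinj : Function.Injective F := by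
    intro a b hab
    have h1 : (Xp ^ N) ((a : V) - (b : V)) = 0 := by
      rw [map_sub, sub_eq_zero]
      have := congrArg Subtype.val hab
      rwa [LinearMap.restrict_coe_apply, LinearMap.restrict_coe_apply] at this
    have h2 : (a : V) - (b : V) ∈ U q K d m :=
      sub_mem (Submodule.mem_inf.mp a.2).2 (Submodule.mem_inf.mp b.2).2
    have h3 := inj_pow h hq0 hq hdec hm0 hm h2 h1
    exact Subtype.ext (sub_eq_zero.mp h3)
  have hmlt : m.toNat < d + 1 := by omega
  have hrank : Module.finrank ℂ ↥(W ⊓ U q K d m) =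
      Module.finrank ℂ ↥(W ⊓ U q K d ((d : ℤ) - m)) := by
    have hd := hdim ⟨m.toNat, hmlt⟩
    have e1 : (q : ℂ) ^ (2 * (((⟨m.toNat, hmlt⟩ : Fin (d + 1)) : ℕ) : ℤ) - (d : ℤ)) =
        q ^ (2 * m - (d : ℤ)) := by
      congr 1
      simp only [Fin.val_mk]
      omega
    have e2 : (q : ℂ) ^ ((d : ℤ) - 2 * (((⟨m.toNat, hmlt⟩ : Fin (d + 1)) : ℕ) : ℤ)) =
        q ^ (2 * ((d : ℤ) - m) - (d : ℤ)) := by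
      congr 1
      simp only [Fin.val_mk]
      omega
    rw [e1, e2] at hd
    exact hd
  have hFsurj : Function.Surjective F :=
    (LinearMap.injective_iff_surjective_of_finrank_eq_finrank hrank).mp hFinj
  obtain ⟨x, hx⟩ := hFsurj ⟨y, Submodule.mem_inf.mpr ⟨hyW, hyU⟩⟩
  have hxv := congrArg Subtype.val hx
  rw [LinearMap.restrict_coe_apply] at hxv
  exact ⟨x.val, (Submodule.mem_inf.mp x.2).1, (Submodule.mem_inf.mp x.2).2, hxv⟩

/-- Induction measure. -/
def meas (d : ℕ) (j : ℤ) : ℕ :=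
  (if j < 0 ∨ (d : ℤ) < j then 0 else if (d : ℤ) < 2 * j then 2 * ((d : ℤ) - j) + 1
    else 2 * j).toNat

lemma key [FiniteDimensional ℂ V] (h : IsUqSl2 q Xp Xm K Kinv) (hq0 : q ≠ 0)
    (hq : ∀ n : ℕ, 0 < n → q ^ n ≠ 1)
    (hdec : ⨆ i : Fin (d + 1), Module.End.eigenspace K (q ^ (2 * (i : ℤ) - d)) = ⊤)
    {W : Submodule ℂ V} (hXp : ∀ v ∈ W, Xp v ∈ W)
    (hdim : ∀ i : Fin (d + 1),
      Module.finrank ℂ ↥(W ⊓ Module.End.eigenspace K (q ^ (2 * (i : ℤ) - d))) =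
        Module.finrank ℂ ↥(W ⊓ Module.End.eigenspace K (q ^ ((d : ℤ) - 2 * i)))) :
    ∀ (n : ℕ) (j : ℤ), meas d j ≤ n → ∀ v, v ∈ W → v ∈ U q K d j → Xm v ∈ W := by
  intro n
  induction n using Nat.strong_induction_on with
  | _ n IH =>
  intro j hj v hvW hvU
  by_cases hout : j < 0 ∨ (d : ℤ) < j
  · rw [U_eq_bot hq0 hq hdec hout, Submodule.mem_bot] at hvU
    rw [hvU, map_zero]
    exact W.zero_mem
  push_neg at hout
  obtain ⟨hj0, hjd⟩ := hout
  by_cases hup : (d : ℤ) < 2 * j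
  · -- upper half
    have hm0 : (0 : ℤ) ≤ (d : ℤ) - j := by omega
    have hm : 2 * ((d : ℤ) - j) ≤ (d : ℤ) := by omega
    have hyU : v ∈ U q K d ((d : ℤ) - ((d : ℤ) - j)) := by
      rwa [show (d : ℤ) - ((d : ℤ) - j) = j from by ring]
    obtain ⟨u, huW, huU, hXu⟩ := surj_W h hq0 hq hdec hXp hdim hm0 hm hvW hyU
    obtain ⟨N', hN'⟩ : ∃ N', ((d : ℤ) - 2 * ((d : ℤ) - j)).toNat = N' + 1 :=
      ⟨((d : ℤ) - 2 * ((d : ℤ) - j)).toNat - 1, by omega⟩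
    rw [hN'] at hXu
    obtain ⟨c, hc⟩ := L2p h hq0 N' huU
    rw [hXu] at hc
    rw [hc]
    have hless : meas d ((d : ℤ) - j) < n := by
      have h1 : meas d ((d : ℤ) - j) < meas d j := by
        unfold meas; split_ifs <;> omega
      omega
    have hXmu : Xm u ∈ W := IH (meas d ((d : ℤ) - j)) hless _ le_rfl u huW huU
    exact add_mem (XpW_pow hXp _ _ hXmu) (Submodule.smul_mem _ _ (XpW_pow hXp _ _ huW))
  · push_neg at hup
    by_cases hj00 : j = 0
    · subst hj00
      have h1 := Xm_mem h hq0 hvU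
      rw [U_eq_bot hq0 hq hdec (Or.inl (by omega)), Submodule.mem_bot] at h1
      rw [h1]
      exact W.zero_mem
    · have hj1 : 1 ≤ j := by omega
      obtain ⟨M', hM'⟩ : ∃ M', ((d : ℤ) - 2 * (j - 1)).toNat = M' + 1 :=
        ⟨((d : ℤ) - 2 * (j - 1)).toNat - 1, by omega⟩
      have hMZ : ((M' + 1 : ℕ) : ℤ) = (d : ℤ) - 2 * j + 2 := by omega
      obtain ⟨c, hc⟩ := L2p h hq0 M' hvU
      have hT : (Xp ^ (M' + 1)) (Xm v) = Xm ((Xp ^ (M' + 1)) v) - c • (Xp ^ M') v := by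
        rw [hc]; abel
      have hv1 : (Xp ^ (M' + 1)) v ∈ U q K d (j + ((M' + 1 : ℕ) : ℤ)) :=
        Xp_pow_mem h hq0 _ hvU
      have hrec : Xm ((Xp ^ (M' + 1)) v) ∈ W := by
        have hless : meas d (j + ((M' + 1 : ℕ) : ℤ)) < n := by
          have h1 : meas d (j + ((M' + 1 : ℕ) : ℤ)) < meas d j := by
            unfold meas; split_ifs <;> omega
          omega
        exact IH _ hless _ le_rfl _ (XpW_pow hXp _ _ hvW) hv1
      have hterm1U : Xm ((Xp ^ (M' + 1)) v) ∈ U q K d ((d : ℤ) - (j - 1)) := by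
        have h2 := Xm_mem h hq0 hv1
        rwa [show j + ((M' + 1 : ℕ) : ℤ) - 1 = (d : ℤ) - (j - 1) from by omega] at h2
      have hterm2U : (Xp ^ M') v ∈ U q K d ((d : ℤ) - (j - 1)) := by
        have h2 := Xp_pow_mem h hq0 M' hvU
        rwa [show j + ((M' : ℕ) : ℤ) = (d : ℤ) - (j - 1) from by omega] at h2
      have hyW : (Xp ^ (M' + 1)) (Xm v) ∈ W := by
        rw [hT]
        exact sub_mem hrec (Submodule.smul_mem _ _ (XpW_pow hXp _ _ hvW))
      have hyU : (Xp ^ (M' + 1)) (Xm v) ∈ U q K d ((d : ℤ) - (j - 1)) := by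
        rw [hT]
        exact sub_mem hterm1U (Submodule.smul_mem _ _ hterm2U)
      obtain ⟨x, hxW, hxU, hXx⟩ := surj_W h hq0 hq hdec hXp hdim (m := j - 1)
        (by omega) (by omega) hyW hyU
      rw [hM'] at hXx
      have hdiff : (Xp ^ (M' + 1)) (Xm v - x) = 0 := by
        rw [map_sub, hXx, sub_self]
      have hdiffU : Xm v - x ∈ U q K d (j - 1) := sub_mem (Xm_mem h hq0 hvU) hxU
      have hzero := inj_pow h hq0 hq hdec (m := j - 1) (by omega) (by omega) hdiffU
        (by rw [hM']; exact hdiff)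
      have hxm : Xm v = x := by rwa [sub_eq_zero] at hzero
      rw [hxm]
      exact hxW

lemma comp_mem_W (hq0 : q ≠ 0) (hq : ∀ n : ℕ, 0 < n → q ^ n ≠ 1)
    {W : Submodule ℂ V} (hK : ∀ v ∈ W, K v ∈ W) :
    ∀ (s : Finset (Fin (d + 1))) (f : Fin (d + 1) → V),
      (∀ i ∈ s, f i ∈ U q K d (i : ℤ)) → (∑ i ∈ s, f i) ∈ W → ∀ i ∈ s, f i ∈ W := by
  classical
  intro s
  induction s using Finset.induction_on with
  | empty => intro f _ _ i hi; exact absurd hi (Finset.notMem_empty i)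
  | @insert j t hj ih =>
    intro f hf hsum i hi
    set g : Fin (d + 1) → V := fun i => K (f i) - (q ^ (2 * (j : ℤ) - (d : ℤ))) • f i with hg
    have hgeq : ∀ i ∈ insert j t, g i =
        (q ^ (2 * (i : ℤ) - (d : ℤ)) - q ^ (2 * (j : ℤ) - (d : ℤ))) • f i := by
      intro i hi'
      rw [hg]
      simp only []
      rw [mem_U.mp (hf i hi'), sub_smul]
    have hgU : ∀ i ∈ t, g i ∈ U q K d (i : ℤ) := by
      intro i hit
      rw [hgeq i (Finset.mem_insert_of_mem hit)]
      exact Submodule.smul_mem _ _ (hf i (Finset.mem_insert_of_mem hit))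
    have hsumg : (∑ i ∈ t, g i) ∈ W := by
      have h1 : K (∑ i ∈ insert j t, f i) -
          (q ^ (2 * (j : ℤ) - (d : ℤ))) • (∑ i ∈ insert j t, f i) ∈ W :=
        sub_mem (hK _ hsum) (Submodule.smul_mem _ _ hsum)
      have h2 : K (∑ i ∈ insert j t, f i) -
          (q ^ (2 * (j : ℤ) - (d : ℤ))) • (∑ i ∈ insert j t, f i) = ∑ i ∈ insert j t, g i := by
        rw [map_sum, Finset.smul_sum, ← Finset.sum_sub_distrib]
      have hgj : g j = 0 := by
        rw [hgeq j (Finset.mem_insert_self j t), sub_self, zero_smul]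
      have h3 : ∑ i ∈ insert j t, g i = ∑ i ∈ t, g i := by
        rw [Finset.sum_insert hj, hgj, zero_add]
      rw [h2, h3] at h1
      exact h1
    have hft : ∀ i ∈ t, f i ∈ W := by
      intro i hit
      have hgi := ih g hgU hsumg i hit
      rw [hgeq i (Finset.mem_insert_of_mem hit)] at hgi
      have hne : (q ^ (2 * (i : ℤ) - (d : ℤ)) - q ^ (2 * (j : ℤ) - (d : ℤ))) ≠ 0 := by
        rw [sub_ne_zero]
        intro heq
        have h4 := qpow_inj hq0 hq heq
        have hij : i = j := Fin.ext (by omega)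
        exact hj (hij ▸ hit)
      have h5 := Submodule.smul_mem W
        (q ^ (2 * (i : ℤ) - (d : ℤ)) - q ^ (2 * (j : ℤ) - (d : ℤ)))⁻¹ hgi
      rwa [smul_smul, inv_mul_cancel₀ hne, one_smul] at h5
    rcases Finset.mem_insert.mp hi with rfl | hit
    · have h6 : f i = (∑ i' ∈ insert i t, f i') - ∑ i' ∈ t, f i' := by
        rw [Finset.sum_insert hj]; abel
      rw [h6]
      exact sub_mem hsum (Submodule.sum_mem _ fun i' hi' => hft i' hi')
    · exact hft i hit

end Stmt5

/-- if `W` is invariant under `X⁺` and `K` and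
`dim (W ∩ Uᵢ) = dim (W ∩ U_{d-i})` for all `i` (where `Uᵢ` is the eigenspace of `K`
with eigenvalue `q^(2i-d)`, and these eigenspaces span `V`), then `W` is invariant
under `X⁻`. -/
theorem stmt5 (q : ℂ) (hq0 : q ≠ 0) (hq : ∀ n : ℕ, 0 < n → q ^ n ≠ 1)
    {V : Type*} [AddCommGroup V] [Module ℂ V] [FiniteDimensional ℂ V]
    (Xp Xm K Kinv : Module.End ℂ V) (h : IsUqSl2 q Xp Xm K Kinv) (d : ℕ)
    (hdec : ⨆ i : Fin (d + 1), Module.End.eigenspace K (q ^ (2 * (i : ℤ) - d)) = ⊤)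
    (W : Submodule ℂ V)
    (hXp : ∀ v ∈ W, Xp v ∈ W) (hK : ∀ v ∈ W, K v ∈ W)
    (hdim : ∀ i : Fin (d + 1),
      Module.finrank ℂ ↥(W ⊓ Module.End.eigenspace K (q ^ (2 * (i : ℤ) - d))) =
        Module.finrank ℂ ↥(W ⊓ Module.End.eigenspace K (q ^ ((d : ℤ) - 2 * i)))) :
    ∀ v ∈ W, Xm v ∈ W := by
  intro v hv
  have hvtop : v ∈ ⨆ i : Fin (d + 1), Module.End.eigenspace K (q ^ (2 * (i : ℤ) - d)) := by
    rw [hdec]; trivial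
  rw [Submodule.mem_iSup_iff_exists_finsupp] at hvtop
  obtain ⟨F, hF, hFsum⟩ := hvtop
  have hFU : ∀ i ∈ F.support, F i ∈ Stmt5.U q K d (i : ℤ) := fun i _ => hF i
  have hFsum' : (∑ i ∈ F.support, F i) = v := hFsum
  have hFW : ∀ i ∈ F.support, F i ∈ W :=
    Stmt5.comp_mem_W hq0 hq hK F.support F hFU (by rw [hFsum']; exact hv)
  have hXmv : Xm v = ∑ i ∈ F.support, Xm (F i) := by
    rw [← hFsum', map_sum]
  rw [hXmv]
  refine Submodule.sum_mem _ fun i hi => ?_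
  exact Stmt5.key h hq0 hq hdec hXp hdim (Stmt5.meas d (i : ℤ)) (i : ℤ) le_rfl (F i)
    (hFW i hi) (hF i)

end
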